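/- For every positive integer m and every integer s with m ≤ s ≤ 4m+1, s/√(4m+1) ∈ W_{m+2}(√(4m+1)). -/

import Mathlib

open scoped BigOperators

/-- `W r α` : the smallest set of nonneg reals containing `α` and closed under the
multiset rule from the paper. -/
inductive W (r : ℕ) (α : ℝ) : ℝ → Prop
  | base : W r α α
  | step (s : ℕ) (q : Fin s → ℝ) (β : ℝ)
      (hq : ∀ i, W r α (q i)) (hqpos : ∀ i, 0 < q i)
      (hβeq : β = α - ∑ i, (q i)⁻¹) (hβ0 : 0 ≤ β)
      (hs1 : 1 ≤ s) (hs : (s : ℤ) ≤ (r : ℤ) - ⌈β / (β + 1)⌉) : W r α β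

lemma ceil_aux (β : ℝ) (h : 0 ≤ β) : ⌈β / (β + 1)⌉ ≤ 1 := by
  rw [Int.ceil_le]
  push_cast
  rw [div_le_one (by linarith)]
  linarith

/-- step with `n + 1 ≤ r` terms, no ceiling bookkeeping needed. -/
lemma Wstep' {r : ℕ} {α : ℝ} (n : ℕ) (hn : 1 ≤ n) (hnr : n + 1 ≤ r)
    (q : Fin n → ℝ) (hq : ∀ i, W r α (q i)) (hpos : ∀ i, 0 < q i)
    (β : ℝ) (hβeq : β = α - ∑ i, (q i)⁻¹) (hβ0 : 0 ≤ β) : W r α β := by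
  refine W.step n q β hq hpos hβeq hβ0 hn ?_
  have h1 := ceil_aux β hβ0
  have h2 : (n : ℤ) + 1 ≤ (r : ℤ) := by exact_mod_cast hnr
  linarith

/-- step using `n` copies of a single element `x`. -/
lemma WstepConst {r : ℕ} {α : ℝ} (n : ℕ) (hn : 1 ≤ n) (hnr : n + 1 ≤ r)
    (x : ℝ) (hx : W r α x) (hxpos : 0 < x)
    (β : ℝ) (hβeq : β = α - n * x⁻¹) (hβ0 : 0 ≤ β) : W r α β := by
  refine Wstep' n hn hnr (fun _ => x) (fun _ => hx) (fun _ => hxpos) β ?_ hβ0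
  rw [hβeq]
  congr 1
  rw [Finset.sum_const, Finset.card_univ, Fintype.card_fin, nsmul_eq_mul]

lemma sum_ite_lt (n ρ : ℕ) (h : ρ ≤ n) :
    (∑ i ∈ Finset.range n, (if i < ρ then 1 else 0 : ℕ)) = ρ := by
  rw [← Finset.sum_filter]
  have hf : (Finset.range n).filter (fun i => i < ρ) = Finset.range ρ := by
    ext x
    simp only [Finset.mem_filter, Finset.mem_range]
    omega
  rw [hf, Finset.sum_const, Finset.card_range, smul_eq_mul, mul_one]

/-- the top band: `n/√N` via `a = 4m+1-n` copies of `α`. -/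
lemma Wbig (m n a : ℕ) (hna : n + a = 4 * m + 1) (ha : a ≤ m + 1) :
    W (m + 2) (Real.sqrt (4 * m + 1)) ((n : ℝ) / Real.sqrt (4 * m + 1)) := by
  have hx0 : (0 : ℝ) < 4 * m + 1 := by positivity
  set R := Real.sqrt (4 * m + 1) with hRdef
  have hR0 : 0 < R := Real.sqrt_pos.mpr hx0
  have hRne : R ≠ 0 := ne_of_gt hR0
  have hRR : R * R = 4 * m + 1 := Real.mul_self_sqrt hx0.le
  have h1 : (n : ℝ) + a = R * R := by
    rw [hRR]; exact_mod_cast hna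
  rcases Nat.eq_zero_or_pos a with h0 | hpos
  · have : (n : ℝ) / R = R := by
      rw [div_eq_iff hRne, ← h1, h0]
      push_cast
      ring
    rw [this]; exact W.base
  · refine WstepConst a hpos (by omega) R W.base hR0 _ ?_ (by positivity)
    rw [inv_eq_one_div, eq_sub_iff_add_eq, mul_one_div, ← add_div,
      div_eq_iff hRne]
    exact h1

set_option maxHeartbeats 1000000 in
/-- main induction (fuel = how far `s` is below `4m+1`). -/
lemma Wmain (m : ℕ) (hm : 1 ≤ m) :
    ∀ fuel s : ℕ, m ≤ s → s ≤ 4 * m + 1 → 4 * m + 1 ≤ s + fuel →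
      W (m + 2) (Real.sqrt (4 * m + 1)) ((s : ℝ) / Real.sqrt (4 * m + 1)) := by
  intro fuel
  induction fuel with
  | zero =>
    intro s hs1 hs2 hf
    exact Wbig m s 0 (by omega) (by omega)
  | succ f ih =>
    intro s hs1 hs2 hf
    by_cases hbig : 3 * m ≤ s
    · exact Wbig m s (4 * m + 1 - s) (by omega) (by omega)
    -- now m ≤ s ≤ 3m - 1
    have hs3 : s + 1 ≤ 3 * m := by omega
    obtain ⟨K, hKdef⟩ : ∃ K, K = 4 * m + 1 - s := ⟨_, rfl⟩
    have hK : K + s = 4 * m + 1 := by omega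
    have hKlo : m + 2 ≤ K := by omega
    have hK0 : 0 < K := by omega
    obtain ⟨A, hA⟩ : ∃ A, A = (m + 1) * (s + 1) := ⟨_, rfl⟩
    obtain ⟨v, hv⟩ : ∃ v, v = (A + (K - 1)) / K := ⟨_, rfl⟩
    obtain ⟨rK, hrK⟩ : ∃ rK, rK = (A + (K - 1)) % K := ⟨_, rfl⟩
    obtain ⟨w, hw⟩ : ∃ w, w = K * v := ⟨_, rfl⟩
    have hdm : w + rK = A + (K - 1) := by
      rw [hw, hv, hrK]; exact Nat.div_add_mod _ _
    have hmodK : rK < K := by rw [hrK]; exact Nat.mod_lt _ hK0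
    have hA1 : 1 ≤ A := by
      rw [hA]; exact Nat.one_le_iff_ne_zero.mpr (by positivity)
    have hvK_ge : A ≤ w := by omega
    have hvK_le : w ≤ A + (K - 1) := by omega
    have hv1 : 1 ≤ v := by
      rw [hv]
      rw [Nat.one_le_div_iff hK0]
      omega
    have hAz : (A : ℤ) = ((m : ℤ) + 1) * ((s : ℤ) + 1) := by
      rw [hA]; push_cast; ring
    have hKz : (K : ℤ) = 4 * (m : ℤ) + 1 - (s : ℤ) := by omega
    -- v ≤ s
    have hAsK : A ≤ s * K := by
      zify
      nlinarith [hAz, hKz,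
        mul_nonneg (show (0:ℤ) ≤ (s:ℤ) - 1 by omega)
          (show (0:ℤ) ≤ (K:ℤ) - (m:ℤ) - 2 by omega),
        show (1:ℤ) ≤ (m:ℤ) by omega]
    have hv_le_s : v ≤ s := by
      have hlt : v < s + 1 := by
        rw [hv, Nat.div_lt_iff_lt_mul hK0]
        have hexp : (s + 1) * K = s * K + K := by ring
        omega
      omega
    -- the key inequality : w ≤ (m+1) * (v + m + 1)
    have hCC : (0:ℤ) ≤ ((K:ℤ) - 2*m - 2) * (((K:ℤ) - 2*m - 2) - 1) := by
      rcases le_or_gt ((K:ℤ) - 2*m - 2) 0 with h | h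
      · nlinarith
      · nlinarith
    have hPineq : (A + (K - 1)) * (K - (m + 1)) ≤ (m + 1) ^ 2 * K := by
      zify [show 1 ≤ K by omega, show m + 1 ≤ K by omega]
      have key : ((m:ℤ)+1)^2 * (K:ℤ) - ((A:ℤ) + ((K:ℤ)-1)) * ((K:ℤ) - ((m:ℤ)+1))
          = (((K:ℤ)-2*m-2)*(((K:ℤ)-2*m-2)-1))*m + ((m:ℤ)+1) := by
        rw [hAz, hKz]; ring
      linarith [mul_nonneg hCC (show (0:ℤ) ≤ (m:ℤ) by positivity), key]
    have hwP : w * (K - (m + 1)) ≤ (m + 1) ^ 2 * K :=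
      le_trans (Nat.mul_le_mul_right _ hvK_le) hPineq
    have hvP : v * (K - (m + 1)) ≤ (m + 1) ^ 2 := by
      have h1 : K * (v * (K - (m + 1))) ≤ K * ((m + 1) ^ 2) := by
        calc K * (v * (K - (m + 1))) = (K * v) * (K - (m + 1)) := by ring
        _ = w * (K - (m + 1)) := by rw [hw]
        _ ≤ (m + 1) ^ 2 * K := hwP
        _ = K * ((m + 1) ^ 2) := by ring
      exact Nat.le_of_mul_le_mul_left h1 hK0
    have hwle : w ≤ (m + 1) * (v + (m + 1)) := by
      have hKsplit : (K - (m + 1)) + (m + 1) = K := by omega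
      calc w = K * v := hw
      _ = ((K - (m + 1)) + (m + 1)) * v := by rw [hKsplit]
      _ = v * (K - (m + 1)) + v * (m + 1) := by ring
      _ ≤ (m + 1) ^ 2 + v * (m + 1) := Nat.add_le_add_right hvP _
      _ = (m + 1) * (v + (m + 1)) := by ring
    -- T and ρ
    obtain ⟨T, hT⟩ : ∃ T, T = w / (m + 1) := ⟨_, rfl⟩
    obtain ⟨ρ, hρ⟩ : ∃ ρ, ρ = w % (m + 1) := ⟨_, rfl⟩
    have hTm : (m + 1) * T + ρ = w := by rw [hT, hρ]; exact Nat.div_add_mod _ _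
    have hρlt : ρ < m + 1 := by rw [hρ]; exact Nat.mod_lt _ (by omega)
    have hT_lo : s + 1 ≤ T := by
      by_contra hcon
      push_neg at hcon
      have h1 : (m + 1) * T ≤ (m + 1) * s := Nat.mul_le_mul_left _ (by omega)
      have h2 : A = (m + 1) * s + (m + 1) := by rw [hA]; ring
      omega
    have hT_hi : T ≤ v + m + 1 := by
      have h1 : (m + 1) * T ≤ (m + 1) * (v + (m + 1)) := by omega
      have := Nat.le_of_mul_le_mul_left h1 (by omega : 0 < m + 1)
      omega
    have hT_hi' : 1 ≤ ρ → T + 1 ≤ v + m + 1 := by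
      intro hρ1
      have h1 : (m + 1) * T < (m + 1) * (v + (m + 1)) := by omega
      have := Nat.lt_of_mul_lt_mul_left h1
      omega
    -- the multiset of integers t i
    set t : Fin (m + 1) → ℕ := fun i => if (i : ℕ) < ρ then T + 1 else T with htdef
    have hti_lo : ∀ i, s + 1 ≤ t i := by
      intro i; simp only [htdef]; split <;> omega
    have hti_hi : ∀ i, t i ≤ v + m + 1 := by
      intro i; simp only [htdef]; split
      · exact hT_hi' (by omega)
      · exact hT_hi
    have hti_N : ∀ i, t i ≤ 4 * m + 1 := by
      intro i; have := hti_hi i; omega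
    have hti_gtv : ∀ i, v < t i := by
      intro i; have := hti_lo i; omega
    have hsum : (∑ i : Fin (m + 1), t i) = w := by
      simp only [htdef]
      rw [Fin.sum_univ_eq_sum_range (fun i => if i < ρ then T + 1 else T)]
      have h1 : ∀ i ∈ Finset.range (m + 1),
          (if i < ρ then T + 1 else T) = T + (if i < ρ then 1 else 0) := by
        intro i _; split <;> omega
      rw [Finset.sum_congr rfl h1, Finset.sum_add_distrib, Finset.sum_const,
        Finset.card_range, smul_eq_mul, sum_ite_lt _ _ (by omega)]
      exact hTm
    -- real stuff
    have hx0 : (0 : ℝ) < 4 * m + 1 := by positivity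
    set R := Real.sqrt (4 * m + 1) with hRdef
    have hR0 : 0 < R := Real.sqrt_pos.mpr hx0
    have hRne : R ≠ 0 := ne_of_gt hR0
    have hRR : R * R = 4 * m + 1 := Real.mul_self_sqrt hx0.le
    have hvR : (0:ℝ) < (v:ℝ) := by exact_mod_cast hv1
    have hvRne : (v:ℝ) ≠ 0 := ne_of_gt hvR
    -- the middle elements Y i = v*R/(t i)
    have hY : ∀ i : Fin (m + 1), W (m + 2) R ((v : ℝ) * R / (t i)) := by
      intro i
      have hti0' : 0 < t i := by have := hti_lo i; omega
      have hti0 : (0:ℝ) < (t i : ℝ) := by exact_mod_cast hti0'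
      have htine : (t i : ℝ) ≠ 0 := ne_of_gt hti0
      have htiW : W (m + 2) R ((t i : ℝ) / R) :=
        ih (t i) (by have := hti_lo i; omega) (hti_N i) (by have := hti_lo i; omega)
      refine WstepConst (t i - v) (by have := hti_gtv i; omega)
        (by have := hti_hi i; omega) ((t i : ℝ) / R) htiW (div_pos hti0 hR0) _ ?_ ?_
      · have hcast : ((t i - v : ℕ) : ℝ) = (t i : ℝ) - v :=
          Nat.cast_sub (le_of_lt (hti_gtv i))
        rw [hcast, inv_div]
        field_simp
        ring
      · positivity
    -- final step
    refine Wstep' (m + 1) (by omega) (by omega)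
      (fun i => (v : ℝ) * R / (t i)) hY
      (fun i => by
        have hti0 : (0:ℝ) < (t i : ℝ) := by
          have := hti_lo i
          exact_mod_cast (by omega : 0 < t i)
        exact div_pos (mul_pos hvR hR0) hti0) _ ?_ (by positivity)
    have hsumR : (∑ i : Fin (m + 1), ((v : ℝ) * R / (t i))⁻¹) = (K : ℝ) / R := by
      have hwcast : (w : ℝ) = (v : ℝ) * K := by rw [hw]; push_cast; ring
      calc (∑ i : Fin (m + 1), ((v : ℝ) * R / (t i))⁻¹)
          = ∑ i : Fin (m + 1), (t i : ℝ) / ((v:ℝ) * R) := by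
            exact Finset.sum_congr rfl (fun i _ => by rw [inv_div])
        _ = (∑ i : Fin (m + 1), (t i : ℝ)) / ((v:ℝ) * R) := by
            rw [Finset.sum_div]
        _ = ((w : ℝ)) / ((v:ℝ) * R) := by
            congr 1
            rw [← hsum]
            exact (Nat.cast_sum _ _).symm
        _ = (K : ℝ) / R := by
            rw [hwcast]
            exact mul_div_mul_left _ _ hvRne
    rw [hsumR]
    have hKs : (s : ℝ) + K = R * R := by
      rw [hRR]
      have : ((K + s : ℕ) : ℝ) = ((4 * m + 1 : ℕ) : ℝ) := by rw [hK]
      push_cast at this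
      linarith
    rw [eq_sub_iff_add_eq, ← add_div, div_eq_iff hRne]
    linarith [hKs]

theorem stmt_13 (m : ℕ) (hm : 0 < m) (s : ℕ) (hs1 : m ≤ s) (hs2 : s ≤ 4 * m + 1) :
    W (m + 2) (Real.sqrt (4 * m + 1)) ((s : ℝ) / Real.sqrt (4 * m + 1)) := by
  exact Wmain m hm (4 * m + 1) s hs1 hs2 (by omega)
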